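/- Let F : ℝⁿ → ℝᵐ be differentiable with Jacobian J, and suppose each component gradient ∇F⁽ⁱ⁾ (i = 1, …, m) is Lipschitz continuous with constant κ_lg > 0 and ∇F⁽ⁱ⁾(x) is s-sparse at the point x ∈ ℝⁿ. Let σ > 0 and v¹, …, v^p ∈ ℝⁿ with ‖vʲ‖ ≤ κ_bv for all j, let A ∈ ℝ^{p×n} be the matrix whose j-th row is (vʲ)ᵀ, and for each i let y⁽ⁱ⁾ ∈ ℝ^p have entries yʲ⁽ⁱ⁾ = F⁽ⁱ⁾(x + σvʲ) − F⁽ⁱ⁾(x). Assume A has the s-sparse ℓ1-recovery property with constant c₁ > 0. For each i, let g⁽ⁱ⁾ be a minimizer of ‖g‖₁ over {g ∈ ℝⁿ : ‖Ag − σ⁻¹y⁽ⁱ⁾‖ ≤ (√p/2) κ_lg κ_bv² σ}, and let J_m ∈ ℝ^{m×n} be the matrix whose i-th row is (g⁽ⁱ⁾)ᵀ. Then ‖J_m − J(x)‖_F ≤ (√(mp)/2) c₁ κ_lg κ_bv² σ, where ‖·‖_F is the Frobenius norm. -/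

import Mathlib

open Filter Matrix MeasureTheory

/-- The map `x ↦ A x` from `ℝⁿ` to `ℝᵖ` with the Euclidean (`ℓ²`) structure. -/
noncomputable def mulVecE {p n : ℕ} (A : Matrix (Fin p) (Fin n) ℝ)
    (x : EuclideanSpace ℝ (Fin n)) : EuclideanSpace ℝ (Fin p) :=
  (WithLp.equiv 2 (Fin p → ℝ)).symm (A.mulVec ((WithLp.equiv 2 (Fin n → ℝ)) x))

/-- The `i`-th row of a matrix, as a Euclidean vector. -/
noncomputable def rowE {m n : ℕ} (A : Matrix (Fin m) (Fin n) ℝ) (i : Fin m) :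
    EuclideanSpace ℝ (Fin n) :=
  (WithLp.equiv 2 (Fin n → ℝ)).symm (A i)

/-- The `ℓ¹` norm on `ℝⁿ`. -/
noncomputable def oneNorm {n : ℕ} (x : EuclideanSpace ℝ (Fin n)) : ℝ :=
  ∑ i, |x i|

/-- The Frobenius norm of a matrix. -/
noncomputable def frobNorm {m n : ℕ} (A : Matrix (Fin m) (Fin n) ℝ) : ℝ :=
  Real.sqrt (∑ i, ∑ j, (A i j) ^ 2)

/-- `x` is `s`-sparse: it has at most `s` nonzero entries. -/
def IsSparse {n : ℕ} (s : ℕ) (x : EuclideanSpace ℝ (Fin n)) : Prop :=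
  (Finset.univ.filter fun i => x i ≠ 0).card ≤ s

/-- `A` has the `s`-sparse `ℓ¹`-recovery property with constant `c₁`. -/
def RecoveryProperty {p n : ℕ} (s : ℕ) (A : Matrix (Fin p) (Fin n) ℝ)
    (c₁ : ℝ) : Prop :=
  ∀ xhat : EuclideanSpace ℝ (Fin n), IsSparse s xhat →
    ∀ ξ : ℝ, 0 ≤ ξ →
      ∀ y : EuclideanSpace ℝ (Fin p), ‖mulVecE A xhat - y‖ ≤ ξ →
        ∀ xstar : EuclideanSpace ℝ (Fin n), ‖mulVecE A xstar - y‖ ≤ ξ →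
          (∀ x : EuclideanSpace ℝ (Fin n), ‖mulVecE A x - y‖ ≤ ξ →
            oneNorm xstar ≤ oneNorm x) →
          ‖xstar - xhat‖ ≤ c₁ * ξ

lemma taylor_quad {E : Type*} [NormedAddCommGroup E] [InnerProductSpace ℝ E] [CompleteSpace E]
    (f : E → ℝ) (gr : E → E) (hf : ∀ z, HasGradientAt f (gr z) z)
    (L : ℝ) (hL : 0 ≤ L) (hlip : ∀ a b, ‖gr a - gr b‖ ≤ L * ‖a - b‖)
    (x h : E) : |f (x + h) - f x - inner ℝ (gr x) h| ≤ L / 2 * ‖h‖ ^ 2 := by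
  set D : ℝ → ℝ := fun t => (inner ℝ (gr (x + t • h) - gr x) h : ℝ) with hD
  have hgrcont : Continuous gr := by
    refine (LipschitzWith.of_dist_le_mul (K := L.toNNReal) fun a b => ?_).continuous
    simpa [dist_eq_norm, Real.coe_toNNReal L hL] using hlip a b
  have hDcont : Continuous D :=
    (Continuous.inner ((hgrcont.comp (by continuity)).sub continuous_const) continuous_const)
  have hder : ∀ t : ℝ, HasDerivAt (fun t : ℝ => f (x + t • h) - t * inner ℝ (gr x) h) (D t) t := by
    intro t
    have hc : HasDerivAt (fun t : ℝ => x + t • h) h t := by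
      simpa using ((hasDerivAt_id t).smul_const h).const_add x
    have h1 : HasDerivAt (fun t : ℝ => f (x + t • h))
        ((inner ℝ (gr (x + t • h)) h : ℝ)) t := by
      have := (hf (x + t • h)).hasFDerivAt.comp_hasDerivAt t hc
      have this2 : HasDerivAt (fun t : ℝ => f (x + t • h)) _ t := this
      simpa using this2
    have h2 : HasDerivAt (fun t : ℝ => t * inner ℝ (gr x) h) (inner ℝ (gr x) h : ℝ) t := by
      simpa using (hasDerivAt_id t).mul_const (inner ℝ (gr x) h : ℝ)
    have h12 : HasDerivAt (fun t : ℝ => f (x + t • h) - t * inner ℝ (gr x) h) _ t := h1.sub h2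
    simpa [hD, inner_sub_left] using h12
  have hint : (f (x + h) - f x - inner ℝ (gr x) h : ℝ) = ∫ t in (0:ℝ)..1, D t := by
    have := intervalIntegral.integral_eq_sub_of_hasDerivAt
      (f := fun t : ℝ => f (x + t • h) - t * inner ℝ (gr x) h)
      (a := (0:ℝ)) (b := 1) (fun t _ => hder t) (hDcont.intervalIntegrable 0 1)
    simp at this
    linarith
  rw [hint]
  have hbound : ∀ᵐ t ∂(MeasureTheory.volume.restrict (Set.uIoc (0:ℝ) 1)),
      ‖D t‖ ≤ (L * ‖h‖ ^ 2) * t := by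
    refine MeasureTheory.ae_restrict_of_forall_mem measurableSet_uIoc fun t ht => ?_
    rw [Set.uIoc_of_le zero_le_one] at ht
    have ht0 : 0 < t := ht.1
    have : ‖D t‖ ≤ ‖gr (x + t • h) - gr x‖ * ‖h‖ := by
      simpa [hD, Real.norm_eq_abs] using abs_real_inner_le_norm (gr (x + t • h) - gr x) h
    refine this.trans ?_
    have h2 : ‖gr (x + t • h) - gr x‖ ≤ L * (t * ‖h‖) := by
      have := hlip (x + t • h) x
      simpa [norm_smul, abs_of_pos ht0] using this
    calc ‖gr (x + t • h) - gr x‖ * ‖h‖ ≤ (L * (t * ‖h‖)) * ‖h‖ :=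
          mul_le_mul_of_nonneg_right h2 (norm_nonneg _)
      _ = (L * ‖h‖ ^ 2) * t := by ring
  have := intervalIntegral.norm_integral_le_of_norm_le (μ := MeasureTheory.volume)
    (g := fun t => (L * ‖h‖ ^ 2) * t) (a := (0:ℝ)) (b := 1) zero_le_one
      ((MeasureTheory.ae_restrict_iff' measurableSet_Ioc).1
        (by rw [← Set.uIoc_of_le zero_le_one]; exact hbound))
    ((continuous_const.mul continuous_id).intervalIntegrable 0 1)
  rw [intervalIntegral.integral_const_mul, integral_id] at this
  calc |∫ t in (0:ℝ)..1, D t| = ‖∫ t in (0:ℝ)..1, D t‖ := (Real.norm_eq_abs _).symm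
    _ ≤ L * ‖h‖ ^ 2 * ((1 ^ 2 - 0 ^ 2) / 2) := this
    _ = L / 2 * ‖h‖ ^ 2 := by ring

/-- Frobenius-norm accuracy of the sparse Jacobian model built row-by-row by
`ℓ¹` minimization: `‖J_m − J(x)‖_F ≤ (√(mp)/2) c₁ κlg κbv² σ`. -/
theorem sparse_jacobian_model_frobenius_accuracy {n m p : ℕ}
    (F : EuclideanSpace ℝ (Fin n) → EuclideanSpace ℝ (Fin m))
    (J : EuclideanSpace ℝ (Fin n) → Matrix (Fin m) (Fin n) ℝ)
    (hF : ∀ z i, HasGradientAt (fun w => F w i) (rowE (J z) i) z)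
    (κlg : ℝ) (hκlg : 0 < κlg)
    (hlip : ∀ i y z, ‖rowE (J y) i - rowE (J z) i‖ ≤ κlg * ‖y - z‖)
    (s : ℕ) (x : EuclideanSpace ℝ (Fin n))
    (hsparse : ∀ i, IsSparse s (rowE (J x) i))
    (σ : ℝ) (hσ : 0 < σ)
    (v : Fin p → EuclideanSpace ℝ (Fin n)) (κbv : ℝ)
    (hv : ∀ j, ‖v j‖ ≤ κbv)
    (A : Matrix (Fin p) (Fin n) ℝ) (hA : ∀ j i, A j i = v j i)
    (y : Fin m → EuclideanSpace ℝ (Fin p))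
    (hy : ∀ i j, y i j = F (x + σ • v j) i - F x i)
    (c₁ : ℝ) (hc₁ : 0 < c₁) (hrec : RecoveryProperty s A c₁)
    (g : Fin m → EuclideanSpace ℝ (Fin n))
    (hfeas : ∀ i, ‖mulVecE A (g i) - σ⁻¹ • y i‖ ≤ (Real.sqrt p / 2) * κlg * κbv ^ 2 * σ)
    (hmin : ∀ i, ∀ g' : EuclideanSpace ℝ (Fin n),
      ‖mulVecE A g' - σ⁻¹ • y i‖ ≤ (Real.sqrt p / 2) * κlg * κbv ^ 2 * σ →
      oneNorm (g i) ≤ oneNorm g')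
    (Jm : Matrix (Fin m) (Fin n) ℝ) (hJm : ∀ i j, Jm i j = g i j) :
    frobNorm (Jm - J x) ≤ (Real.sqrt (m * p) / 2) * c₁ * κlg * κbv ^ 2 * σ := by
  have hσ0 : σ ≠ 0 := ne_of_gt hσ
  set ξ : ℝ := (Real.sqrt p / 2) * κlg * κbv ^ 2 * σ with hξdef
  have hξ : 0 ≤ ξ := by positivity
  have hentry : ∀ (i : Fin m) (j : Fin p),
      |(mulVecE A (rowE (J x) i) - σ⁻¹ • y i) j| ≤ κlg / 2 * κbv ^ 2 * σ := by
    intro i j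
    have hT := taylor_quad (fun w => F w i) (fun z => rowE (J z) i)
      (fun z => hF z i) κlg hκlg.le (fun a b => hlip i a b) x (σ • v j)
    have hip : (inner ℝ (rowE (J x) i) (σ • v j) : ℝ)
        = σ * ∑ k, v j k * J x i k := by
      rw [real_inner_smul_right]
      congr 1
    have hval : (mulVecE A (rowE (J x) i) - σ⁻¹ • y i) j
        = -(σ⁻¹ * (F (x + σ • v j) i - F x i - inner ℝ (rowE (J x) i) (σ • v j))) := by
      rw [hip]
      simp only [mulVecE, rowE, PiLp.sub_apply, PiLp.smul_apply, smul_eq_mul,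
        WithLp.equiv_symm_apply, PiLp.toLp_apply, WithLp.equiv_apply, WithLp.ofLp_toLp, Equiv.apply_symm_apply, Matrix.mulVec,
        dotProduct, hy i j, hA]
      field_simp
      ring
    rw [hval, abs_neg, abs_mul, abs_of_nonneg (inv_nonneg.2 hσ.le)]
    have hvb : ‖v j‖ ^ 2 ≤ κbv ^ 2 := by nlinarith [norm_nonneg (v j), hv j]
    have hn : ‖σ • v j‖ ^ 2 = σ ^ 2 * ‖v j‖ ^ 2 := by
      rw [norm_smul, mul_pow, Real.norm_eq_abs, sq_abs]
    have h1 : |F (x + σ • v j) i - F x i - (inner ℝ (rowE (J x) i) (σ • v j) : ℝ)|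
        ≤ κlg / 2 * (σ ^ 2 * κbv ^ 2) := by
      refine hT.trans ?_
      rw [hn]
      nlinarith [mul_nonneg (sq_nonneg σ) (sub_nonneg.2 hvb), hκlg.le,
        mul_nonneg hκlg.le (mul_nonneg (sq_nonneg σ) (sub_nonneg.2 hvb))]
    calc σ⁻¹ * |F (x + σ • v j) i - F x i - (inner ℝ (rowE (J x) i) (σ • v j) : ℝ)|
        ≤ σ⁻¹ * (κlg / 2 * (σ ^ 2 * κbv ^ 2)) :=
          mul_le_mul_of_nonneg_left h1 (inv_nonneg.2 hσ.le)
      _ = κlg / 2 * κbv ^ 2 * σ := by field_simp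
  have hfeashat : ∀ i, ‖mulVecE A (rowE (J x) i) - σ⁻¹ • y i‖ ≤ ξ := by
    intro i
    have hc0 : (0:ℝ) ≤ κlg / 2 * κbv ^ 2 * σ := by positivity
    rw [EuclideanSpace.norm_eq]
    have hsb : ∑ j, ‖(mulVecE A (rowE (J x) i) - σ⁻¹ • y i) j‖ ^ 2
        ≤ (p : ℝ) * (κlg / 2 * κbv ^ 2 * σ) ^ 2 := by
      calc ∑ j, ‖(mulVecE A (rowE (J x) i) - σ⁻¹ • y i) j‖ ^ 2
          ≤ ∑ _j : Fin p, (κlg / 2 * κbv ^ 2 * σ) ^ 2 := by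
            refine Finset.sum_le_sum fun j _ => ?_
            rw [Real.norm_eq_abs]
            exact pow_le_pow_left₀ (abs_nonneg _) (hentry i j) 2
        _ = (p : ℝ) * (κlg / 2 * κbv ^ 2 * σ) ^ 2 := by
            simp [Finset.sum_const, mul_comm]
    calc Real.sqrt (∑ j, ‖(mulVecE A (rowE (J x) i) - σ⁻¹ • y i) j‖ ^ 2)
        ≤ Real.sqrt ((p : ℝ) * (κlg / 2 * κbv ^ 2 * σ) ^ 2) := Real.sqrt_le_sqrt hsb
      _ = Real.sqrt p * (κlg / 2 * κbv ^ 2 * σ) := by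
          rw [Real.sqrt_mul (Nat.cast_nonneg p), Real.sqrt_sq hc0]
      _ = ξ := by rw [hξdef]; ring
  have hkey : ∀ i, ‖g i - rowE (J x) i‖ ≤ c₁ * ξ := fun i =>
    hrec (rowE (J x) i) (hsparse i) ξ hξ (σ⁻¹ • y i) (hfeashat i) (g i) (hfeas i) (hmin i)
  have hrow : ∀ i, ∑ j, ((Jm - J x) i j) ^ 2 = ‖g i - rowE (J x) i‖ ^ 2 := by
    intro i
    rw [EuclideanSpace.norm_eq,
      Real.sq_sqrt (Finset.sum_nonneg fun j _ => sq_nonneg _)]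
    refine Finset.sum_congr rfl fun j _ => ?_
    simp [Matrix.sub_apply, hJm, rowE, Real.norm_eq_abs, sq_abs,
      WithLp.equiv_symm_apply, PiLp.toLp_apply]
  have hsum : ∑ i, ∑ j, ((Jm - J x) i j) ^ 2 ≤ (m : ℝ) * (c₁ * ξ) ^ 2 := by
    calc ∑ i, ∑ j, ((Jm - J x) i j) ^ 2 = ∑ i : Fin m, ‖g i - rowE (J x) i‖ ^ 2 :=
          Finset.sum_congr rfl fun i _ => hrow i
      _ ≤ ∑ _i : Fin m, (c₁ * ξ) ^ 2 :=
          Finset.sum_le_sum fun i _ => pow_le_pow_left₀ (norm_nonneg _) (hkey i) 2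
      _ = (m : ℝ) * (c₁ * ξ) ^ 2 := by simp [Finset.sum_const, mul_comm]
  rw [frobNorm]
  calc Real.sqrt (∑ i, ∑ j, ((Jm - J x) i j) ^ 2)
      ≤ Real.sqrt ((m : ℝ) * (c₁ * ξ) ^ 2) := Real.sqrt_le_sqrt hsum
    _ = Real.sqrt m * (c₁ * ξ) := by
        rw [Real.sqrt_mul (Nat.cast_nonneg m), Real.sqrt_sq (by positivity)]
    _ = (Real.sqrt (m * p) / 2) * c₁ * κlg * κbv ^ 2 * σ := by
        rw [hξdef]
        push_cast
        rw [Real.sqrt_mul (Nat.cast_nonneg m)]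
        ring
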